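/- Let x^1, …, x^n be pairwise distinct points in ℝ^d, let Φ ∈ ℝ^{n×n} have entries Φ_{ij} = ‖x^i − x^j‖₂³, and let P ∈ ℝ^{n×(d+1)} have i-th row ((x^i)ᵀ, 1). If rank(P) = d + 1, then for every F ∈ ℝ^n there exist unique γ ∈ ℝ^n and λ ∈ ℝ^{d+1} satisfying Φγ + Pλ = F and Pᵀγ = 0; hence the cubic RBF interpolant of any data values F on these points exists and is uniquely determined. -/

import Mathlib

open Matrix MeasureTheory Metric Finset intervalIntegral
open scoped RealInnerProductSpace

private lemma hasDeriv_cubic (a b u : ℝ) :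
    HasDerivAt (fun u : ℝ => a*b*u - (a+b)*u^2/2 + u^3/3) ((a-u)*(b-u)) u := by
  have h := (((hasDerivAt_id' (x := u)).const_mul (a*b)).sub
      (((hasDerivAt_pow 2 u).const_mul (a+b)).div_const 2)).add
      ((hasDerivAt_pow 3 u).div_const 3)
  refine h.congr_deriv ?_
  push_cast
  ring

private lemma pairInt {a b m M : ℝ} (hma : m ≤ a) (haM : a ≤ M) (hmb : m ≤ b) (hbM : b ≤ M) :
    ∫ u in m..M, max (a - u) 0 * max (b - u) 0
      = (-((a-m)^3 + (b-m)^3) + 3*(a-m)*(b-m)*((a-m)+(b-m)) + |a-b|^3) / 12 := by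
  wlog hab : a ≤ b generalizing a b
  · have h := this hmb hbM hma haM (le_of_not_ge hab)
    simp_rw [mul_comm (max (a - _) 0)]
    rw [h, abs_sub_comm b a]
    ring
  have hmM : m ≤ M := hma.trans haM
  have cont : ∀ c : ℝ, Continuous fun u : ℝ => max (c - u) 0 :=
    fun c => (continuous_const.sub continuous_id).max continuous_const
  have contf : Continuous fun u : ℝ => max (a - u) 0 * max (b - u) 0 := (cont a).mul (cont b)
  have i1 : IntervalIntegrable (fun u : ℝ => max (a - u) 0 * max (b - u) 0) volume m a :=
    contf.intervalIntegrable _ _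
  have i2 : IntervalIntegrable (fun u : ℝ => max (a - u) 0 * max (b - u) 0) volume a M :=
    contf.intervalIntegrable _ _
  rw [← integral_add_adjacent_intervals i1 i2]
  have e2 : ∫ u in a..M, max (a - u) 0 * max (b - u) 0 = 0 := by
    rw [show (0:ℝ) = ∫ _ in a..M, (0:ℝ) from (intervalIntegral.integral_zero).symm]
    apply intervalIntegral.integral_congr
    intro u hu
    rw [Set.uIcc_of_le haM] at hu
    have : a - u ≤ 0 := by linarith [hu.1]
    simp [max_eq_right this]
  have e1 : ∫ u in m..a, max (a - u) 0 * max (b - u) 0 = ∫ u in m..a, (a-u)*(b-u) := by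
    apply intervalIntegral.integral_congr
    intro u hu
    rw [Set.uIcc_of_le hma] at hu
    have h1 : 0 ≤ a - u := by linarith [hu.2]
    have h2 : 0 ≤ b - u := by linarith [hu.2]
    simp [max_eq_left h1, max_eq_left h2]
  have e3 : ∫ u in m..a, (a-u)*(b-u)
      = (a*b*a - (a+b)*a^2/2 + a^3/3) - (a*b*m - (a+b)*m^2/2 + m^3/3) :=
    integral_eq_sub_of_hasDerivAt (fun u _ => hasDeriv_cubic a b u)
      (((continuous_const.sub continuous_id).mul (continuous_const.sub continuous_id)).intervalIntegrable _ _)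
  rw [e1, e3, e2, add_zero, abs_of_nonpos (by linarith : a - b ≤ 0)]
  ring

private lemma oneD_identity {n : ℕ} (t γ : Fin n → ℝ) (m M : ℝ)
    (hm : ∀ i, m ≤ t i) (hM : ∀ i, t i ≤ M)
    (h1 : ∑ i, γ i = 0) (h2 : ∑ i, γ i * t i = 0) :
    ∑ i, ∑ j, γ i * γ j * |t i - t j| ^ 3
      = 12 * ∫ u in m..M, (∑ i, γ i * max (t i - u) 0) ^ 2 := by
  have cont : ∀ c : ℝ, Continuous fun u : ℝ => max (c - u) 0 :=
    fun c => (continuous_const.sub continuous_id).max continuous_const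
  have hs1 : ∑ i, γ i * (t i - m) = 0 := by
    simp_rw [mul_sub]
    rw [Finset.sum_sub_distrib, h2, ← Finset.sum_mul, h1]
    ring
  -- step 1 : expand the square and integrate term by term
  have step1 : (∫ u in m..M, (∑ i, γ i * max (t i - u) 0) ^ 2)
      = ∑ i, ∑ j, γ i * γ j * ∫ u in m..M, max (t i - u) 0 * max (t j - u) 0 := by
    have hpt : ∀ u : ℝ, (∑ i, γ i * max (t i - u) 0) ^ 2
        = ∑ i, ∑ j, γ i * γ j * (max (t i - u) 0 * max (t j - u) 0) := by
      intro u
      rw [sq, Finset.sum_mul_sum]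
      exact Finset.sum_congr rfl fun i _ => Finset.sum_congr rfl fun j _ => by ring
    simp_rw [hpt]
    rw [intervalIntegral.integral_finset_sum (μ := volume)
      (f := fun i u => ∑ j, γ i * γ j * (max (t i - u) 0 * max (t j - u) 0)) (fun i _ =>
      (continuous_finset_sum _ fun j _ =>
        (continuous_const.mul ((cont (t i)).mul (cont (t j))))).intervalIntegrable _ _)]
    refine Finset.sum_congr rfl fun i _ => ?_
    rw [intervalIntegral.integral_finset_sum (μ := volume)
      (f := fun j u => γ i * γ j * (max (t i - u) 0 * max (t j - u) 0)) (fun j _ =>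
      (continuous_const.mul ((cont (t i)).mul (cont (t j)))).intervalIntegrable _ _)]
    exact Finset.sum_congr rfl fun j _ => intervalIntegral.integral_const_mul _ _
  rw [step1]
  have step2 : ∀ i j : Fin n, γ i * γ j * (∫ u in m..M, max (t i - u) 0 * max (t j - u) 0)
      = γ i * γ j * ((-(((t i - m))^3 + ((t j - m))^3)
          + 3*(t i - m)*(t j - m)*((t i - m)+(t j - m)) + |t i - t j|^3) / 12) := by
    intro i j
    rw [pairInt (hm i) (hM i) (hm j) (hM j)]
  simp_rw [step2]
  -- split each term
  have split : ∀ i j : Fin n, γ i * γ j * ((-(((t i - m))^3 + ((t j - m))^3)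
          + 3*(t i - m)*(t j - m)*((t i - m)+(t j - m)) + |t i - t j|^3) / 12) * 12
      = (-((γ i * (t i - m)^3) * γ j) - γ i * (γ j * (t j - m)^3)
          + (3 * (γ i * (t i - m)^2)) * (γ j * (t j - m))
          + (γ i * (t i - m)) * (3 * (γ j * (t j - m)^2)))
        + γ i * γ j * |t i - t j| ^ 3 := fun i j => by ring
  rw [mul_comm (12:ℝ)]
  simp_rw [Finset.sum_mul, split, Finset.sum_add_distrib, Finset.sum_sub_distrib,
    Finset.sum_neg_distrib]
  simp_rw [← Finset.mul_sum]
  simp only [← Finset.sum_mul]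
  rw [h1, hs1]
  simp

private lemma oneD_nonneg {n : ℕ} (t γ : Fin n → ℝ)
    (h1 : ∑ i, γ i = 0) (h2 : ∑ i, γ i * t i = 0) :
    0 ≤ ∑ i, ∑ j, γ i * γ j * |t i - t j| ^ 3 := by
  rcases Nat.eq_zero_or_pos n with hn | hn
  · subst hn; simp
  have hne : (univ : Finset (Fin n)).Nonempty := ⟨⟨0, hn⟩, mem_univ _⟩
  set m := univ.inf' hne t with hmdef
  set M := univ.sup' hne t with hMdef
  have hm : ∀ i, m ≤ t i := fun i => inf'_le _ (mem_univ i)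
  have hM : ∀ i, t i ≤ M := fun i => le_sup' _ (mem_univ i)
  rw [oneD_identity t γ m M hm hM h1 h2]
  have : 0 ≤ ∫ u in m..M, (∑ i, γ i * max (t i - u) 0) ^ 2 :=
    intervalIntegral.integral_nonneg ((hm ⟨0, hn⟩).trans (hM ⟨0, hn⟩))
      (fun u _ => sq_nonneg _)
  linarith

private lemma oneD_strict {n : ℕ} {t γ : Fin n → ℝ} (ht : Function.Injective t)
    (h1 : ∑ i, γ i = 0) (h2 : ∑ i, γ i * t i = 0)
    (hQ : ∑ i, ∑ j, γ i * γ j * |t i - t j| ^ 3 = 0) : γ = 0 := by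
  rcases Nat.eq_zero_or_pos n with hn | hn
  · subst hn; funext i; exact absurd i.2 (by omega)
  have hne : (univ : Finset (Fin n)).Nonempty := ⟨⟨0, hn⟩, mem_univ _⟩
  set m := univ.inf' hne t with hmdef
  set M := univ.sup' hne t with hMdef
  have hm : ∀ i, m ≤ t i := fun i => inf'_le _ (mem_univ i)
  have hM : ∀ i, t i ≤ M := fun i => le_sup' _ (mem_univ i)
  have hmM : m ≤ M := (hm ⟨0, hn⟩).trans (hM ⟨0, hn⟩)
  set g : ℝ → ℝ := fun u => ∑ i, γ i * max (t i - u) 0 with hgdef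
  have hgcont : Continuous g := continuous_finset_sum _ fun i _ =>
    continuous_const.mul ((continuous_const.sub continuous_id).max continuous_const)
  have hid := oneD_identity t γ m M hm hM h1 h2
  rw [hQ] at hid
  have hint0 : ∫ u in m..M, g u ^ 2 = 0 := by
    have : ∫ u in m..M, (∑ i, γ i * max (t i - u) 0) ^ 2 = 0 := by linarith
    simpa [hgdef] using this
  have gzero_out : ∀ u : ℝ, u ∉ Set.Ioc m M → g u = 0 := by
    intro u hu
    rw [Set.mem_Ioc, not_and_or] at hu
    rcases hu with hu | hu
    · push_neg at hu
      have he : ∀ i, max (t i - u) 0 = t i - u :=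
        fun i => max_eq_left (by linarith [hm i])
      simp_rw [hgdef, he, mul_sub]
      rw [Finset.sum_sub_distrib, h2, ← Finset.sum_mul, h1]
      ring
    · push_neg at hu
      have he : ∀ i, max (t i - u) 0 = 0 :=
        fun i => max_eq_right (by linarith [hM i])
      simp [hgdef, he]
  have gz : g = 0 := by
    have hInt : IntegrableOn (fun u => g u ^ 2) (Set.Ioc m M) volume :=
      ((hgcont.pow 2).intervalIntegrable m M).1
    have h0 : ∫ u in Set.Ioc m M, g u ^ 2 ∂volume = 0 := by
      rw [← intervalIntegral.integral_of_le hmM]; exact hint0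
    have hae := (setIntegral_eq_zero_iff_of_nonneg_ae
        (Filter.Eventually.of_forall fun u => sq_nonneg (g u)) hInt).mp h0
    have hae2 : ∀ᵐ u : ℝ ∂volume, u ∈ Set.Ioc m M → g u ^ 2 = 0 :=
      (ae_restrict_iff' measurableSet_Ioc).mp hae
    have haeg : g =ᵐ[volume] 0 := by
      filter_upwards [hae2] with u hu
      by_cases hmem : u ∈ Set.Ioc m M
      · exact pow_eq_zero_iff (two_ne_zero) |>.mp (hu hmem)
      · exact gzero_out u hmem
    exact (hgcont.ae_eq_iff_eq volume continuous_const).mp haeg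
  funext i
  show γ i = (0 : Fin n → ℝ) i
  rw [Pi.zero_apply]
  by_cases hone : ∀ j, j = i
  · have : ∑ j, γ j = γ i :=
      Finset.sum_eq_single_of_mem i (mem_univ i) (fun j _ hj => absurd (hone j) hj)
    linarith [h1]
  · push_neg at hone
    obtain ⟨j₀, hj₀⟩ := hone
    have hj₀' : j₀ ∈ univ.erase i := mem_erase.mpr ⟨hj₀, mem_univ _⟩
    set ε := (univ.erase i).inf' ⟨j₀, hj₀'⟩ (fun j => |t j - t i|) with hεdef
    have hεpos : 0 < ε := by
      rw [hεdef]
      refine (Finset.lt_inf'_iff _).2 ?_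
      intro j hj
      exact abs_pos.mpr (sub_ne_zero.mpr (fun h => (mem_erase.mp hj).1 (ht h)))
    have hεle : ∀ j, j ≠ i → ε ≤ |t j - t i| :=
      fun j hj => inf'_le _ (mem_erase.mpr ⟨hj, mem_univ _⟩)
    have key : ∑ j, (γ j * max (t j - (t i - ε/2)) 0 - 2 * (γ j * max (t j - t i) 0)
        + γ j * max (t j - (t i + ε/2)) 0) = γ i * (ε/2) := by
      rw [Finset.sum_eq_single_of_mem i (mem_univ i)]
      · have e1 : max (t i - (t i - ε/2)) 0 = ε/2 := by
          rw [max_eq_left]; ring_nf; linarith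
        have e2 : max (t i - t i) 0 = 0 := by simp
        have e3 : max (t i - (t i + ε/2)) 0 = 0 := by
          rw [max_eq_right]; linarith
        rw [e1, e2, e3]; ring
      · intro j _ hj
        have hd := hεle j hj
        rcases lt_or_gt_of_ne (fun h : t j = t i => hj (ht h)) with hlt | hgt
        · rw [abs_of_nonpos (by linarith)] at hd
          have e1 : max (t j - (t i - ε/2)) 0 = 0 := by rw [max_eq_right]; linarith
          have e2 : max (t j - t i) 0 = 0 := by rw [max_eq_right]; linarith
          have e3 : max (t j - (t i + ε/2)) 0 = 0 := by rw [max_eq_right]; linarith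
          rw [e1, e2, e3]; ring
        · rw [abs_of_nonneg (by linarith)] at hd
          have e1 : max (t j - (t i - ε/2)) 0 = t j - t i + ε/2 := by
            rw [show t j - (t i - ε/2) = t j - t i + ε/2 by ring]
            exact max_eq_left (by linarith)
          have e2 : max (t j - t i) 0 = t j - t i := by rw [max_eq_left]; linarith
          have e3 : max (t j - (t i + ε/2)) 0 = t j - t i - ε/2 := by
            rw [show t j - (t i + ε/2) = t j - t i - ε/2 by ring]
            exact max_eq_left (by linarith)
          rw [e1, e2, e3]; ring
    have gsum : ∑ j, (γ j * max (t j - (t i - ε/2)) 0 - 2 * (γ j * max (t j - t i) 0)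
        + γ j * max (t j - (t i + ε/2)) 0)
        = g (t i - ε/2) - 2 * g (t i) + g (t i + ε/2) := by
      rw [Finset.sum_add_distrib, Finset.sum_sub_distrib, ← Finset.mul_sum]
    rw [gsum, gz] at key
    have h0 : γ i * (ε/2) = 0 := by simpa using key.symm
    rcases mul_eq_zero.mp h0 with h | h
    · exact h
    · linarith

variable {d : ℕ}

private lemma rotInt (hd : 0 < d) (z : EuclideanSpace ℝ (Fin d)) :
    ∫ u in closedBall (0 : EuclideanSpace ℝ (Fin d)) 1, |⟪z, u⟫| ^ 3
      = (∫ u in closedBall (0 : EuclideanSpace ℝ (Fin d)) 1, |u ⟨0, hd⟩| ^ 3) * ‖z‖ ^ 3 := by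
  by_cases hz : z = 0
  · simp [hz]
  set i₀ : Fin d := ⟨0, hd⟩
  set e₀ : EuclideanSpace ℝ (Fin d) := EuclideanSpace.single i₀ (1:ℝ) with he₀
  set v : EuclideanSpace ℝ (Fin d) := ‖z‖⁻¹ • z with hv
  have hnz : ‖z‖ ≠ 0 := norm_ne_zero_iff.mpr hz
  have hnorme₀ : ‖e₀‖ = 1 := by simp [he₀, EuclideanSpace.norm_single]
  have hnormv : ‖v‖ = 1 := by
    rw [hv, norm_smul, norm_inv, norm_norm, inv_mul_cancel₀ hnz]
  set R := Submodule.reflection (ℝ ∙ (e₀ - v))ᗮ with hR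
  have hRe₀ : R e₀ = v := Submodule.reflection_sub (by rw [hnorme₀, hnormv])
  have hmp : MeasurePreserving R volume volume := R.measurePreserving
  have hpre : R ⁻¹' (closedBall (0 : EuclideanSpace ℝ (Fin d)) 1)
      = closedBall (0 : EuclideanSpace ℝ (Fin d)) 1 := by
    ext u
    simp only [Set.mem_preimage, mem_closedBall, dist_zero_right]
    rw [R.norm_map]
  have step := hmp.setIntegral_preimage_emb R.toHomeomorph.measurableEmbedding
    (fun u => |⟪z, u⟫| ^ 3) (closedBall (0 : EuclideanSpace ℝ (Fin d)) 1)
  rw [hpre] at step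
  rw [← step]
  have hzv : z = ‖z‖ • v := by rw [hv, smul_smul, mul_inv_cancel₀ hnz, one_smul]
  have hinner : ∀ u, ⟪z, R u⟫ = ‖z‖ * u i₀ := by
    intro u
    calc ⟪z, R u⟫ = ‖z‖ * ⟪v, R u⟫ := by
          conv_lhs => rw [hzv, real_inner_smul_left]
      _ = ‖z‖ * ⟪R e₀, R u⟫ := by rw [hRe₀]
      _ = ‖z‖ * ⟪e₀, u⟫ := by rw [R.inner_map_map]
      _ = ‖z‖ * u i₀ := by
          rw [he₀]
          rw [EuclideanSpace.inner_single_left]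
          simp
  simp_rw [hinner]
  rw [← MeasureTheory.integral_mul_const]
  congr 1
  funext u
  rw [abs_mul, abs_of_nonneg (norm_nonneg z), mul_pow]
  ring

variable {d n : ℕ}

private lemma coordCont (i₀ : Fin d) :
    Continuous fun u : EuclideanSpace ℝ (Fin d) => u i₀ := by
  exact (continuous_apply i₀).comp (PiLp.continuousLinearEquiv 2 ℝ _).continuous

private lemma cpos (hd : 0 < d) :
    0 < ∫ u in closedBall (0 : EuclideanSpace ℝ (Fin d)) 1, |u ⟨0, hd⟩| ^ 3 := by
  set i₀ : Fin d := ⟨0, hd⟩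
  set f : EuclideanSpace ℝ (Fin d) → ℝ := fun u => |u i₀| ^ 3 with hf
  have hcont : Continuous f := ((coordCont i₀).abs.pow 3)
  have hInt : IntegrableOn f (closedBall (0 : EuclideanSpace ℝ (Fin d)) 1) volume :=
    hcont.continuousOn.integrableOn_compact (isCompact_closedBall _ _)
  rw [setIntegral_pos_iff_support_of_nonneg_ae
    (Filter.Eventually.of_forall fun u => by positivity) hInt]
  set K : Submodule ℝ (EuclideanSpace ℝ (Fin d)) := (ℝ ∙ (EuclideanSpace.single i₀ (1:ℝ)))ᗮ
  have hK : volume (K : Set (EuclideanSpace ℝ (Fin d))) = 0 := by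
    apply Measure.addHaar_submodule
    intro htop
    have : EuclideanSpace.single i₀ (1:ℝ) ∈ K := htop ▸ Submodule.mem_top
    rw [Submodule.mem_orthogonal_singleton_iff_inner_left] at this
    rw [real_inner_self_eq_norm_sq] at this
    rw [EuclideanSpace.norm_single] at this
    norm_num at this
  have hsub : closedBall (0 : EuclideanSpace ℝ (Fin d)) 1
      ⊆ (Function.support f ∩ closedBall 0 1) ∪ (K : Set (EuclideanSpace ℝ (Fin d))) := by
    intro u hu
    by_cases h : u i₀ = 0
    · right
      rw [SetLike.mem_coe, Submodule.mem_orthogonal_singleton_iff_inner_left]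
      rw [real_inner_comm, EuclideanSpace.inner_single_left]
      simp [h]
    · left
      exact ⟨by simp [hf, Function.mem_support, h], hu⟩
  have h1 : (0:ENNReal) < volume (closedBall (0 : EuclideanSpace ℝ (Fin d)) 1) :=
    measure_closedBall_pos _ _ one_pos
  calc (0:ENNReal) < volume (closedBall (0 : EuclideanSpace ℝ (Fin d)) 1) := h1
    _ ≤ volume ((Function.support f ∩ closedBall 0 1) ∪ (K : Set (EuclideanSpace ℝ (Fin d)))) :=
        measure_mono hsub
    _ ≤ volume (Function.support f ∩ closedBall 0 1) + volume (K : Set (EuclideanSpace ℝ (Fin d))) :=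
        measure_union_le _ _
    _ = volume (Function.support f ∩ closedBall 0 1) := by rw [hK, add_zero]

private lemma strictPD (x : Fin n → EuclideanSpace ℝ (Fin d))
    (hx : Function.Injective x) (γ : Fin n → ℝ)
    (h0 : ∑ i, γ i = 0) (hlin : ∀ k : Fin d, ∑ i, γ i * x i k = 0)
    (hQ : ∑ i, ∑ j, γ i * γ j * ‖x i - x j‖ ^ 3 = 0) : γ = 0 := by
  rcases Nat.eq_zero_or_pos d with hd | hd
  · subst hd
    have hsub : Subsingleton (Fin n) :=
      ⟨fun a b => hx (PiLp.ext fun (i : Fin 0) => absurd i.2 (by omega))⟩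
    funext i
    have hs : ∑ j, γ j = γ i := Finset.sum_eq_single_of_mem i (mem_univ i)
      (fun j _ hj => absurd (Subsingleton.elim j i) hj)
    rw [Pi.zero_apply]; linarith [h0]
  · set cb := closedBall (0 : EuclideanSpace ℝ (Fin d)) 1 with hcb
    have hz : ∑ i, γ i • x i = (0 : EuclideanSpace ℝ (Fin d)) := by
      have hker : ∀ k : Fin d, EuclideanSpace.proj k (∑ i, γ i • x i) = 0 := by
        intro k
        rw [map_sum]
        simpa [smul_eq_mul] using hlin k
      refine PiLp.ext fun k => ?_
      show (∑ i, γ i • x i) k = (0 : ℝ)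
      have e : (∑ i, γ i • x i) k = ∑ i, (γ i • x i) k := by simp [WithLp.ofLp_sum]
      rw [e]
      simpa [smul_eq_mul] using hlin k
    have hmom : ∀ u : EuclideanSpace ℝ (Fin d), ∑ i, γ i * ⟪x i, u⟫ = 0 := by
      intro u
      have e : ∑ i, γ i * ⟪x i, u⟫ = ⟪∑ i, γ i • x i, u⟫ := by
        rw [sum_inner]
        exact Finset.sum_congr rfl fun i _ => (real_inner_smul_left _ _ _).symm
      rw [e, hz, inner_zero_left]
    set F : EuclideanSpace ℝ (Fin d) → ℝ :=
      fun u => ∑ i, ∑ j, γ i * γ j * |⟪x i, u⟫ - ⟪x j, u⟫| ^ 3 with hF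
    have hFnonneg : ∀ u, 0 ≤ F u := fun u =>
      oneD_nonneg (fun i => ⟪x i, u⟫) γ h0 (hmom u)
    have hinnercont : ∀ z : EuclideanSpace ℝ (Fin d),
        Continuous fun u : EuclideanSpace ℝ (Fin d) => ⟪z, u⟫ :=
      fun z => continuous_const.inner continuous_id
    have hterm_cont : ∀ i j : Fin n, Continuous
        (fun u : EuclideanSpace ℝ (Fin d) => γ i * γ j * |⟪x i, u⟫ - ⟪x j, u⟫| ^ 3) :=
      fun i j => continuous_const.mul (((hinnercont (x i)).sub (hinnercont (x j))).abs.pow 3)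
    have hterm_int : ∀ i j : Fin n, IntegrableOn
        (fun u : EuclideanSpace ℝ (Fin d) => γ i * γ j * |⟪x i, u⟫ - ⟪x j, u⟫| ^ 3) cb volume :=
      fun i j => (hterm_cont i j).continuousOn.integrableOn_compact (isCompact_closedBall _ _)
    have hFint : IntegrableOn F cb volume := by
      have : Continuous F := continuous_finset_sum _ fun i _ =>
        continuous_finset_sum _ fun j _ => hterm_cont i j
      exact this.continuousOn.integrableOn_compact (isCompact_closedBall _ _)
    have hIF : ∫ u in cb, F u ∂volume = 0 := by
      have e1 : ∫ u in cb, F u ∂volume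
          = ∑ i, ∑ j, ∫ u in cb, γ i * γ j * |⟪x i, u⟫ - ⟪x j, u⟫| ^ 3 ∂volume := by
        rw [hF]
        rw [integral_finset_sum _ (fun i _ => integrable_finset_sum _ (fun j _ => hterm_int i j))]
        exact Finset.sum_congr rfl fun i _ => integral_finset_sum _ (fun j _ => hterm_int i j)
      have e2 : ∀ i j : Fin n, ∫ u in cb, γ i * γ j * |⟪x i, u⟫ - ⟪x j, u⟫| ^ 3 ∂volume
          = γ i * γ j * ((∫ u in cb, |u ⟨0, hd⟩| ^ 3 ∂volume) * ‖x i - x j‖ ^ 3) := by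
        intro i j
        rw [MeasureTheory.integral_const_mul]
        congr 1
        have e3 : ∀ u : EuclideanSpace ℝ (Fin d), ⟪x i, u⟫ - ⟪x j, u⟫ = ⟪x i - x j, u⟫ :=
          fun u => (inner_sub_left _ _ _).symm
        simp_rw [e3]
        exact rotInt hd (x i - x j)
      rw [e1]
      simp_rw [e2]
      simp_rw [show ∀ i j : Fin n, γ i * γ j * ((∫ u in cb, |u ⟨0, hd⟩| ^ 3 ∂volume) * ‖x i - x j‖ ^ 3)
          = (∫ u in cb, |u ⟨0, hd⟩| ^ 3 ∂volume) * (γ i * γ j * ‖x i - x j‖ ^ 3) from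
        fun i j => by ring, ← Finset.mul_sum]
      rw [hQ, mul_zero]
    have haeF := (setIntegral_eq_zero_iff_of_nonneg_ae
      (Filter.Eventually.of_forall fun u => hFnonneg u) hFint).mp hIF
    have hae : ∀ᵐ u : EuclideanSpace ℝ (Fin d) ∂volume, u ∈ cb → F u = 0 :=
      (ae_restrict_iff' measurableSet_closedBall).mp haeF
    set bad : Set (EuclideanSpace ℝ (Fin d)) :=
      {u | ¬ (u ∈ cb → F u = 0)} ∪
        ⋃ p : {q : Fin n × Fin n // q.1 ≠ q.2},
          {u : EuclideanSpace ℝ (Fin d) | ⟪u, x p.1.1 - x p.1.2⟫ = 0} with hbad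
    have hbadnull : volume bad = 0 := by
      apply measure_union_null
      · exact hae
      · apply measure_iUnion_null
        intro p
        have hzne : x p.1.1 - x p.1.2 ≠ 0 :=
          sub_ne_zero.mpr (fun h => p.2 (hx h))
        have hset : {u : EuclideanSpace ℝ (Fin d) | ⟪u, x p.1.1 - x p.1.2⟫ = 0}
            = ((ℝ ∙ (x p.1.1 - x p.1.2))ᗮ : Submodule ℝ (EuclideanSpace ℝ (Fin d))) := by
          ext u
          rw [SetLike.mem_coe, Submodule.mem_orthogonal_singleton_iff_inner_left]
          rfl
        rw [hset]
        apply Measure.addHaar_submodule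
        intro htop
        have hm : x p.1.1 - x p.1.2 ∈ (ℝ ∙ (x p.1.1 - x p.1.2))ᗮ := htop ▸ Submodule.mem_top
        rw [Submodule.mem_orthogonal_singleton_iff_inner_left,
          real_inner_self_eq_norm_sq] at hm
        exact hzne (norm_eq_zero.mp (pow_eq_zero_iff two_ne_zero |>.mp hm))
    have hcbpos : (0:ENNReal) < volume cb := measure_closedBall_pos _ _ one_pos
    have hdiff : volume (cb \ bad) = volume cb := measure_diff_null hbadnull
    obtain ⟨u, hu⟩ : (cb \ bad).Nonempty := by
      apply nonempty_of_measure_ne_zero (μ := volume)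
      rw [hdiff]
      exact hcbpos.ne'
    obtain ⟨hucb, hubad⟩ := hu
    rw [hbad, Set.mem_union, not_or] at hubad
    obtain ⟨hu1, hu2⟩ := hubad
    have hFu : F u = 0 := by
      rw [Set.mem_setOf_eq, not_not] at hu1
      exact hu1 hucb
    have ht : Function.Injective fun i => ⟪x i, u⟫ := by
      intro i j hij
      by_contra hne
      apply hu2
      rw [Set.mem_iUnion]
      refine ⟨⟨(i, j), hne⟩, ?_⟩
      rw [Set.mem_setOf_eq, real_inner_comm, inner_sub_left]
      have : (⟪x i, u⟫ : ℝ) - ⟪x j, u⟫ = 0 := sub_eq_zero.mpr hij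
      simpa using this
    exact oneD_strict ht h0 (hmom u) hFu

/-- **Existence and uniqueness of the cubic RBF interpolant.**
For pairwise distinct points `x 1, …, x n` in `ℝ^d`, with `Φ i j = ‖x i − x j‖₂³`
and `P` the `n × (d+1)` matrix whose `i`-th row is `((x i)ᵀ, 1)`, if
`rank P = d + 1`, then for every data vector `F ∈ ℝ^n` there exist unique
`γ ∈ ℝ^n` and `λ ∈ ℝ^{d+1}` with `Φγ + Pλ = F` and `Pᵀγ = 0`. -/
theorem cubic_rbf_interpolant_exists_unique
    (d n : ℕ) (x : Fin n → EuclideanSpace ℝ (Fin d))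
    (hx : Function.Injective x)
    (Φ : Matrix (Fin n) (Fin n) ℝ)
    (hΦ : ∀ i j, Φ i j = ‖x i - x j‖ ^ 3)
    (P : Matrix (Fin n) (Fin (d + 1)) ℝ)
    (hP₁ : ∀ i (j : Fin d), P i (Fin.castSucc j) = x i j)
    (hP₂ : ∀ i, P i (Fin.last d) = 1)
    (hrank : P.rank = d + 1) :
    ∀ F : Fin n → ℝ,
      ∃! gl : (Fin n → ℝ) × (Fin (d + 1) → ℝ),
        Φ *ᵥ gl.1 + P *ᵥ gl.2 = F ∧ Pᵀ *ᵥ gl.1 = 0 := by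
  -- P has full column rank, hence `P.mulVec` is injective
  have hPinj : Function.Injective P.mulVec := by
    have hfr : Module.finrank ℝ (LinearMap.range P.mulVecLin) = d + 1 := hrank
    have hrk := LinearMap.finrank_range_add_finrank_ker P.mulVecLin
    rw [hfr, Module.finrank_fin_fun] at hrk
    have hker : LinearMap.ker P.mulVecLin = ⊥ :=
      Submodule.finrank_eq_zero.mp (by omega)
    have := LinearMap.ker_eq_bot.mp hker
    exact this
  -- the big linear operator
  set L : ((Fin n → ℝ) × (Fin (d + 1) → ℝ)) →ₗ[ℝ] ((Fin n → ℝ) × (Fin (d + 1) → ℝ)) :=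
    LinearMap.prod
      ((Φ.mulVecLin.comp (LinearMap.fst ℝ _ _)) + (P.mulVecLin.comp (LinearMap.snd ℝ _ _)))
      ((Pᵀ.mulVecLin).comp (LinearMap.fst ℝ _ _)) with hL
  have hLapp : ∀ p : (Fin n → ℝ) × (Fin (d + 1) → ℝ),
      L p = (Φ *ᵥ p.1 + P *ᵥ p.2, Pᵀ *ᵥ p.1) := fun p => by
    simp [hL, Matrix.mulVecLin_apply, Matrix.mulVec_transpose]
  have hLinj : Function.Injective L := by
    rw [← LinearMap.ker_eq_bot]
    rw [Submodule.eq_bot_iff]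
    rintro ⟨γ, lam⟩ hmem
    rw [LinearMap.mem_ker, hLapp] at hmem
    have e1 : Φ *ᵥ γ + P *ᵥ lam = 0 := congrArg Prod.fst hmem
    have e2 : Pᵀ *ᵥ γ = 0 := congrArg Prod.snd hmem
    -- moment conditions
    have h0 : ∑ i, γ i = 0 := by
      have := congrFun e2 (Fin.last d)
      simp only [Matrix.mulVec, dotProduct, Matrix.transpose_apply, Pi.zero_apply] at this
      simpa [hP₂] using this
    have hlin : ∀ k : Fin d, ∑ i, γ i * x i k = 0 := by
      intro k
      have := congrFun e2 (Fin.castSucc k)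
      simp only [Matrix.mulVec, dotProduct, Matrix.transpose_apply, Pi.zero_apply] at this
      rw [← this]
      exact Finset.sum_congr rfl fun i _ => by rw [hP₁ i k, mul_comm]
    -- quadratic form vanishes
    have hdot : γ ⬝ᵥ (Φ *ᵥ γ) = 0 := by
      have h1 : γ ⬝ᵥ (Φ *ᵥ γ + P *ᵥ lam) = 0 := by rw [e1, dotProduct_zero]
      rw [dotProduct_add] at h1
      have h2 : γ ⬝ᵥ (P *ᵥ lam) = 0 := by
        rw [Matrix.dotProduct_mulVec, ← Matrix.mulVec_transpose, e2, zero_dotProduct]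
      linarith
    have hQ : ∑ i, ∑ j, γ i * γ j * ‖x i - x j‖ ^ 3 = 0 := by
      rw [← hdot]
      simp only [dotProduct, Matrix.mulVec]
      exact Finset.sum_congr rfl fun i _ => by
        rw [Finset.mul_sum]
        exact Finset.sum_congr rfl fun j _ => by rw [hΦ]; ring
    have hγ : γ = 0 := strictPD x hx γ h0 hlin hQ
    have hlam : lam = 0 := by
      apply hPinj
      have : P *ᵥ lam = 0 := by
        have := e1
        rw [hγ, Matrix.mulVec_zero, zero_add] at this
        exact this
      rw [this, Matrix.mulVec_zero]
    rw [hγ, hlam]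
    rfl
  have hLsurj : Function.Surjective L := (LinearMap.injective_iff_surjective).mp hLinj
  intro F
  obtain ⟨p, hp⟩ := hLsurj (F, 0)
  rw [hLapp] at hp
  refine ⟨p, ⟨congrArg Prod.fst hp, congrArg Prod.snd hp⟩, ?_⟩
  rintro q ⟨hq1, hq2⟩
  apply hLinj
  rw [hLapp, hLapp, hp]
  exact Prod.ext hq1 hq2
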